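/- arXiv:2211.09506 — 6 statements merged into one kernel-verified Lean document; each statement's English description precedes it below -/
import Mathlib

section
/- For every quaternion q and every natural number n ≥ 1, the Fueter operator applied to q^n equals the conjugate Fueter operator applied to q̄^n, i.e. D(q^n) = D̄(q̄^n), where D = ∂_{q0} + e1 ∂_{q1} + e2 ∂_{q2} + e3 ∂_{q3} and D̄ = ∂_{q0} - e1 ∂_{q1} - e2 ∂_{q2} - e3 ∂_{q3}. -/
open scoped Quaternion

/-- The imaginary units of the quaternions. -/
def e1 : ℍ[ℝ] := ⟨0,1,0,0⟩
def e2 : ℍ[ℝ] := ⟨0,0,1,0⟩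
def e3 : ℍ[ℝ] := ⟨0,0,0,1⟩

/-- The Fueter operator `D = ∂_{q0} + e1 ∂_{q1} + e2 ∂_{q2} + e3 ∂_{q3}`,
where `∂_{q_i}` is the directional derivative in the direction of the `i`-th unit. -/
noncomputable def fueterD (f : ℍ[ℝ] → ℍ[ℝ]) (q : ℍ[ℝ]) : ℍ[ℝ] :=
  fderiv ℝ f q 1 + e1 * fderiv ℝ f q e1 + e2 * fderiv ℝ f q e2 + e3 * fderiv ℝ f q e3

/-- The conjugate Fueter operator `D̄ = ∂_{q0} - e1 ∂_{q1} - e2 ∂_{q2} - e3 ∂_{q3}`. -/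
noncomputable def fueterDbar (f : ℍ[ℝ] → ℍ[ℝ]) (q : ℍ[ℝ]) : ℍ[ℝ] :=
  fderiv ℝ f q 1 - e1 * fderiv ℝ f q e1 - e2 * fderiv ℝ f q e2 - e3 * fderiv ℝ f q e3

/-- star as an ℝ-continuous-linear map on quaternions. -/
noncomputable def starCLM : ℍ[ℝ] →L[ℝ] ℍ[ℝ] :=
  { toFun := star
    map_add' := star_add
    map_smul' := fun r x => Quaternion.star_smul r x
    cont := continuous_star }

@[simp] lemma starCLM_apply (x : ℍ[ℝ]) : starCLM x = star x := rfl

/-- The Fréchet derivative of `x ↦ x ^ n` at `q`. -/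
noncomputable def powDeriv (n : ℕ) (q : ℍ[ℝ]) : ℍ[ℝ] →L[ℝ] ℍ[ℝ] :=
  ∑ i ∈ Finset.range n,
    ((ContinuousLinearMap.mul ℝ ℍ[ℝ]) (q ^ i)).comp
      (((ContinuousLinearMap.mul ℝ ℍ[ℝ]).flip) (q ^ (n - 1 - i)))

lemma powDeriv_apply (n : ℕ) (q v : ℍ[ℝ]) :
    powDeriv n q v = ∑ i ∈ Finset.range n, q ^ i * v * q ^ (n - 1 - i) := by
  simp [powDeriv, ContinuousLinearMap.sum_apply, mul_assoc]

lemma hasFDerivAt_qpow (n : ℕ) (q : ℍ[ℝ]) :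
    HasFDerivAt (fun x : ℍ[ℝ] => x ^ n) (powDeriv n q) q := by
  induction n with
  | zero => simpa [powDeriv] using hasFDerivAt_const (1 : ℍ[ℝ]) q
  | succ n ih =>
    have h := ih.mul' (hasFDerivAt_id q)
    simp only [pow_succ]
    refine h.congr_fderiv ?_
    refine ContinuousLinearMap.ext fun v => ?_
    simp only [ContinuousLinearMap.add_apply, ContinuousLinearMap.smul_apply,
      ContinuousLinearMap.smulRight_apply, ContinuousLinearMap.id_apply, powDeriv_apply,
      smul_eq_mul, id_eq, Finset.sum_range_succ, Finset.sum_mul]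
    have h1 : ∀ i ∈ Finset.range n,
        q ^ i * v * q ^ (n + 1 - 1 - i) = q ^ i * v * q ^ (n - 1 - i) * q := by
      intro i hi
      rw [Finset.mem_range] at hi
      rw [mul_assoc (q ^ i * v), ← pow_succ]
      congr 2
      omega
    rw [Finset.sum_congr rfl h1]
    simp [add_comm, mul_assoc, Finset.sum_mul]

lemma hasFDerivAt_star_qpow (n : ℕ) (q : ℍ[ℝ]) :
    HasFDerivAt (fun x : ℍ[ℝ] => (star x) ^ n) ((powDeriv n (star q)).comp starCLM) q :=
  (hasFDerivAt_qpow n (star q)).comp q starCLM.hasFDerivAt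

@[simp] lemma star_e1 : star e1 = -e1 := by ext <;> simp <;> simp [e1]
@[simp] lemma star_e2 : star e2 = -e2 := by ext <;> simp <;> simp [e2]
@[simp] lemma star_e3 : star e3 = -e3 := by ext <;> simp <;> simp [e3]

lemma key (x : ℍ[ℝ]) : x + e1 * x * e1 + e2 * x * e2 + e3 * x * e3 = -2 * star x := by
  have h : (-2 : ℍ[ℝ]) * star x = -(star x + star x) := by rw [neg_mul, two_mul]
  rw [h]
  ext <;> simp [Quaternion.re_mul, Quaternion.imI_mul, Quaternion.imJ_mul, Quaternion.imK_mul] <;> simp [e1, e2, e3]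

lemma key2 (x y : ℍ[ℝ]) :
    x * y + e1 * (x * e1 * y) + e2 * (x * e2 * y) + e3 * (x * e3 * y) = -2 * (star x * y) := by
  have h : x * y + e1 * (x * e1 * y) + e2 * (x * e2 * y) + e3 * (x * e3 * y)
      = (x + e1 * x * e1 + e2 * x * e2 + e3 * x * e3) * y := by noncomm_ring
  rw [h, key, mul_assoc]

/-- For every quaternion `q` and every `n ≥ 1`, `D(q^n) = D̄(q̄^n)`. -/
theorem fueterD_pow_eq_fueterDbar_conj_pow (n : ℕ) (hn : 1 ≤ n) (q : ℍ[ℝ]) :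
    fueterD (fun x => x ^ n) q = fueterDbar (fun x => (star x) ^ n) q := by
  have hD : fderiv ℝ (fun x : ℍ[ℝ] => x ^ n) q = powDeriv n q := (hasFDerivAt_qpow n q).fderiv
  have hDbar : fderiv ℝ (fun x : ℍ[ℝ] => (star x) ^ n) q = (powDeriv n (star q)).comp starCLM :=
    (hasFDerivAt_star_qpow n q).fderiv
  rw [fueterD, fueterDbar, hD, hDbar]
  simp only [ContinuousLinearMap.comp_apply, starCLM_apply, star_one, star_e1, star_e2, star_e3,
    map_neg, powDeriv_apply, mul_neg, sub_neg_eq_add]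
  rw [Finset.mul_sum, Finset.mul_sum, Finset.mul_sum, Finset.mul_sum, Finset.mul_sum,
    Finset.mul_sum, ← Finset.sum_add_distrib, ← Finset.sum_add_distrib, ← Finset.sum_add_distrib,
    ← Finset.sum_add_distrib, ← Finset.sum_add_distrib, ← Finset.sum_add_distrib]
  have hL : ∀ i ∈ Finset.range n,
      q ^ i * 1 * q ^ (n - 1 - i) + e1 * (q ^ i * e1 * q ^ (n - 1 - i))
        + e2 * (q ^ i * e2 * q ^ (n - 1 - i)) + e3 * (q ^ i * e3 * q ^ (n - 1 - i))
      = -2 * ((star q) ^ i * q ^ (n - 1 - i)) := by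
    intro i _
    rw [mul_one, key2, star_pow]
  have hR : ∀ i ∈ Finset.range n,
      (star q) ^ i * 1 * (star q) ^ (n - 1 - i) + e1 * ((star q) ^ i * e1 * (star q) ^ (n - 1 - i))
        + e2 * ((star q) ^ i * e2 * (star q) ^ (n - 1 - i))
        + e3 * ((star q) ^ i * e3 * (star q) ^ (n - 1 - i))
      = -2 * (q ^ i * (star q) ^ (n - 1 - i)) := by
    intro i _
    rw [mul_one, key2, star_pow, star_star]
  rw [Finset.sum_congr rfl hL, Finset.sum_congr rfl hR]
  have hcomm : Commute (star q) q := by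
    unfold Commute SemiconjBy
    rw [Quaternion.star_mul_self, Quaternion.self_mul_star]
  rw [← Finset.sum_range_reflect (fun i => -2 * (q ^ i * (star q) ^ (n - 1 - i))) n]
  refine Finset.sum_congr rfl fun i hi => ?_
  rw [Finset.mem_range] at hi
  have : n - 1 - (n - 1 - i) = i := by omega
  rw [this, (hcomm.pow_pow i (n - 1 - i)).eq]
end

section
/- For every natural number n ≥ 1 and every quaternion q, the following algebraic identity holds: (Δ q^n)·q̲ + 2 D(q^n) + D̄(q^n) = 0, where q̲ = (q - q̄)/2 is the imaginary part of q, Δ q^n = -4 ∑_{k=1}^{n-1} (n-k) q^{n-k-1} q̄^{k-1}, D(q^n) = -2 ∑_{k=1}^{n} q^{n-k} q̄^{k-1}, and D̄(q^n) = 2( n q^{n-1} + ∑_{k=1}^{n} q^{n-k} q̄^{k-1} ). -/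
open scoped Quaternion

lemma aux {R : Type*} [Ring R] (a b : R) (h : Commute a b) (m : ℕ) :
    (∑ j ∈ Finset.range m, ((j : R) + 1) * a ^ j * b ^ (m - 1 - j)) * (a - b)
      = ((m : R) + 1) * a ^ m - ∑ j ∈ Finset.range (m + 1), a ^ j * b ^ (m - j) := by
  induction m with
  | zero => simp
  | succ m ih =>
    have hsum : ∑ j ∈ Finset.range (m + 1), ((j : R) + 1) * a ^ j * b ^ (m + 1 - 1 - j)
        = (∑ j ∈ Finset.range m, ((j : R) + 1) * a ^ j * b ^ (m - 1 - j)) * b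
          + ((m : R) + 1) * a ^ m := by
      rw [Finset.sum_range_succ, Finset.sum_mul]
      congr 1
      · refine Finset.sum_congr rfl fun j hj => ?_
        rw [Finset.mem_range] at hj
        have : m + 1 - 1 - j = (m - 1 - j) + 1 := by omega
        simp only [this, pow_succ, mul_assoc]
      · simp
    rw [hsum, add_mul, mul_assoc]
    have hb : b * (a - b) = (a - b) * b := by
      rw [mul_sub, sub_mul, h.eq]
    rw [hb, ← mul_assoc, ih]
    have hlast : ∑ j ∈ Finset.range (m + 1 + 1), a ^ j * b ^ (m + 1 - j)
        = (∑ j ∈ Finset.range (m + 1), a ^ j * b ^ (m - j)) * b + a ^ (m + 1) := by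
      rw [Finset.sum_range_succ, Finset.sum_mul]
      congr 1
      · refine Finset.sum_congr rfl fun j hj => ?_
        rw [Finset.mem_range] at hj
        have : m + 1 - j = (m - j) + 1 := by omega
        simp only [this, pow_succ, mul_assoc]
      · simp
    rw [hlast]
    simp only [pow_succ]
    push_cast
    noncomm_ring


/-- For `n ≥ 1` and every quaternion `q`, the identity
`(Δ q^n)·q̲ + 2 D(q^n) + D̄(q^n) = 0` holds, where `q̲ = (q - q̄)/2` and
`Δ q^n = -4 ∑_{k=1}^{n-1} (n-k) q^{n-k-1} q̄^{k-1}`,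
`D(q^n) = -2 ∑_{k=1}^{n} q^{n-k} q̄^{k-1}`,
`D̄(q^n) = 2 (n q^{n-1} + ∑_{k=1}^{n} q^{n-k} q̄^{k-1})`. -/
theorem laplacian_fueter_identity (n : ℕ) (hn : 1 ≤ n) (q : ℍ[ℝ]) :
    (-4 * ∑ k ∈ Finset.range (n - 1),
        ((n - 1 - k : ℕ) : ℍ[ℝ]) * q ^ (n - 2 - k) * (star q) ^ k) * ((q - star q) / 2) +
      2 * (-2 * ∑ k ∈ Finset.range n, q ^ (n - 1 - k) * (star q) ^ k) +
      2 * ((n : ℍ[ℝ]) * q ^ (n - 1) +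
        ∑ k ∈ Finset.range n, q ^ (n - 1 - k) * (star q) ^ k) = 0 := by
  obtain ⟨m, rfl⟩ : ∃ m, n = m + 1 := ⟨n - 1, by omega⟩
  have hc : Commute q (star q) := (star_comm_self' q).symm
  have h20 : (2:ℍ[ℝ]) ≠ 0 := by
    intro h
    rw [show (2:ℍ[ℝ]) = 1 + 1 from one_add_one_eq_two.symm] at h
    have := congrArg QuaternionAlgebra.re h
    simp at this
  have hT : (∑ k ∈ Finset.range (m + 1 - 1),
        ((m + 1 - 1 - k : ℕ) : ℍ[ℝ]) * q ^ (m + 1 - 2 - k) * (star q) ^ k)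
      = ∑ j ∈ Finset.range m, ((j : ℍ[ℝ]) + 1) * q ^ j * (star q) ^ (m - 1 - j) := by
    rw [← Finset.sum_range_reflect (fun j => ((j : ℍ[ℝ]) + 1) * q ^ j * (star q) ^ (m - 1 - j)) m]
    simp only [Nat.add_sub_cancel]
    refine Finset.sum_congr rfl fun k hk => ?_
    rw [Finset.mem_range] at hk
    have h1 : m + 1 - 2 - k = m - 1 - k := by omega
    have h2 : m - 1 - (m - 1 - k) = k := by omega
    have h3 : m - k = (m - 1 - k) + 1 := by omega
    rw [h1, h2, h3]
    norm_cast
  have hS : (∑ k ∈ Finset.range (m + 1), q ^ (m + 1 - 1 - k) * (star q) ^ k)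
      = ∑ j ∈ Finset.range (m + 1), q ^ j * (star q) ^ (m - j) := by
    rw [← Finset.sum_range_reflect (fun j => q ^ j * (star q) ^ (m - j)) (m + 1)]
    refine Finset.sum_congr rfl fun k hk => ?_
    rw [Finset.mem_range] at hk
    have h2 : m - (m + 1 - 1 - k) = k := by omega
    rw [h2]
  rw [hT, hS]
  have haux := aux q (star q) hc m
  set u := ∑ j ∈ Finset.range m, ((j : ℍ[ℝ]) + 1) * q ^ j * (star q) ^ (m - 1 - j) with hu
  set S := ∑ j ∈ Finset.range (m + 1), q ^ j * (star q) ^ (m - j) with hS'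
  have h4 : -4 * u * ((q - star q) / 2) = -2 * (u * (q - star q)) := by
    rw [div_eq_mul_inv, mul_assoc, ← mul_assoc u, ← mul_assoc]
    have hcm : Commute (u * (q - star q)) ((2 : ℍ[ℝ])) := Commute.ofNat_right _ 2
    rw [mul_assoc]  -- -4 * ((u*(q-b)) * 2⁻¹)
    rw [(hcm.inv_right₀).eq, ← mul_assoc]
    norm_num
    left
    rw [show (4:ℍ[ℝ]) = 2 * 2 by norm_num, mul_assoc, mul_inv_cancel₀ h20, mul_one]
  rw [h4, haux]
  push_cast
  noncomm_ring
end

section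
/- For every natural number n ≥ 1 and every quaternion q, Δ(q^{n+1}) = (Δ q^n)·q0 - D̄(q^n), where q0 is the real part of q, Δ q^m = -4 ∑_{k=1}^{m-1} (m-k) q^{m-k-1} q̄^{k-1}, and D̄(q^n) = 2( n q^{n-1} + ∑_{k=1}^{n} q^{n-k} q̄^{k-1} ). -/
open scoped Quaternion

lemma key_s5 (a b r : ℍ[ℝ]) (hab : Commute a b) (hr : ∀ x : ℍ[ℝ], Commute r x)
    (h2 : a + b = 2 * r) (m : ℕ) :
    -4 * ∑ k ∈ Finset.range (m+1), ((m+1-k:ℕ):ℍ[ℝ]) * a^(m-k) * b^k =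
      (-4 * ∑ k ∈ Finset.range m, ((m-k:ℕ):ℍ[ℝ]) * a^(m-1-k) * b^k) * r
        - 2 * (((m+1:ℕ):ℍ[ℝ]) * a^m + ∑ k ∈ Finset.range (m+1), a^(m-k) * b^k) := by
  have h20 : (2:ℍ[ℝ]) ≠ 0 := by
    intro h
    rw [← one_add_one_eq_two] at h
    have := congrArg QuaternionAlgebra.re h
    simp [Quaternion.re_add, Quaternion.re_one] at this
  apply mul_left_cancel₀ h20
  set S : ℍ[ℝ] := -4 * ∑ k ∈ Finset.range m, ((m-k:ℕ):ℍ[ℝ]) * a^(m-1-k) * b^k with hS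
  set T : ℍ[ℝ] := ((m+1:ℕ):ℍ[ℝ]) * a^m + ∑ k ∈ Finset.range (m+1), a^(m-k) * b^k with hT
  have hSr : 2 * (S * r - 2 * T) = S * (a + b) - 4 * T := by
    rw [h2, two_mul r, mul_add S r r, ← two_mul (S * r)]
    noncomm_ring
  rw [hSr]
  have ha : S * a = -4 * ∑ k ∈ Finset.range m, ((m-k:ℕ):ℍ[ℝ]) * a^(m-k) * b^k := by
    rw [hS, mul_assoc, Finset.sum_mul]
    congr 1
    apply Finset.sum_congr rfl
    intro k hk
    rw [Finset.mem_range] at hk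
    rw [mul_assoc (((m-k:ℕ):ℍ[ℝ]) * a^(m-1-k)) (b^k) a, ← (hab.pow_right k).eq,
      ← mul_assoc, mul_assoc ((m-k:ℕ):ℍ[ℝ]) (a^(m-1-k)) a, ← pow_succ]
    have h1 : m - 1 - k + 1 = m - k := by omega
    rw [h1]
  have hb : S * b = -4 * ((∑ k ∈ Finset.range (m+1), ((m+1-k:ℕ):ℍ[ℝ]) * a^(m-k) * b^k)
      - ((m+1:ℕ):ℍ[ℝ]) * a^m) := by
    rw [hS, mul_assoc, Finset.sum_mul]
    congr 1
    rw [Finset.sum_range_succ' (fun k => ((m+1-k:ℕ):ℍ[ℝ]) * a^(m-k) * b^k) m]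
    simp only [Nat.sub_zero, pow_zero, mul_one, add_sub_cancel_right]
    apply Finset.sum_congr rfl
    intro k hk
    rw [Finset.mem_range] at hk
    have h1 : m + 1 - (k+1) = m - k := by omega
    have h2' : m - (k+1) = m - 1 - k := by omega
    rw [h1, h2', mul_assoc, ← pow_succ]
  rw [mul_add, ha, hb, hT]
  rw [Finset.sum_range_succ (fun k => a^(m-k) * b^k) m]
  rw [Finset.sum_range_succ (fun k => ((m+1-k:ℕ):ℍ[ℝ]) * a^(m-k) * b^k) m]
  have hsplit : ∑ k ∈ Finset.range m, ((m+1-k:ℕ):ℍ[ℝ]) * a^(m-k) * b^k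
      = (∑ k ∈ Finset.range m, ((m-k:ℕ):ℍ[ℝ]) * a^(m-k) * b^k)
        + ∑ k ∈ Finset.range m, a^(m-k) * b^k := by
    rw [← Finset.sum_add_distrib]
    apply Finset.sum_congr rfl
    intro k hk
    rw [Finset.mem_range] at hk
    have h1 : ((m+1-k:ℕ):ℍ[ℝ]) = ((m-k:ℕ):ℍ[ℝ]) + 1 := by
      have : m + 1 - k = (m - k) + 1 := by omega
      rw [this]; push_cast; ring_nf
    rw [h1, add_mul, add_mul, one_mul]
  rw [hsplit]
  simp only [Nat.sub_self, Nat.add_sub_cancel_left, show m+1-m = 1 from by omega,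
    Nat.cast_one, pow_zero, mul_one, one_mul]
  have hcast : ((m+1:ℕ):ℍ[ℝ]) = ((m:ℕ):ℍ[ℝ]) + 1 := by push_cast; ring_nf
  rw [hcast]
  noncomm_ring

/-- For `n ≥ 1` and every quaternion `q`, `Δ(q^{n+1}) = (Δ q^n)·q0 - D̄(q^n)`,
where `q0 = Re(q)`, `Δ q^m = -4 ∑_{k=1}^{m-1} (m-k) q^{m-k-1} q̄^{k-1}` and
`D̄(q^n) = 2 (n q^{n-1} + ∑_{k=1}^{n} q^{n-k} q̄^{k-1})`. -/
theorem laplacian_pow_succ (n : ℕ) (hn : 1 ≤ n) (q : ℍ[ℝ]) :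
    -4 * ∑ k ∈ Finset.range n, ((n - k : ℕ) : ℍ[ℝ]) * q ^ (n - 1 - k) * (star q) ^ k =
      (-4 * ∑ k ∈ Finset.range (n - 1),
          ((n - 1 - k : ℕ) : ℍ[ℝ]) * q ^ (n - 2 - k) * (star q) ^ k) * ((q.re : ℝ) : ℍ[ℝ]) -
        2 * ((n : ℍ[ℝ]) * q ^ (n - 1) +
          ∑ k ∈ Finset.range n, q ^ (n - 1 - k) * (star q) ^ k) := by
  obtain ⟨m, rfl⟩ : ∃ m, n = m + 1 := ⟨n - 1, by omega⟩
  have hab : Commute q (star q) := (star_comm_self' q).symm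
  have h2 : q + star q = 2 * ((q.re:ℝ):ℍ[ℝ]) := Quaternion.self_add_star q
  have := key_s5 q (star q) ((q.re:ℝ):ℍ[ℝ]) hab (fun x => Quaternion.coe_commute _ x) h2 m
  simp only [Nat.add_sub_cancel, show m + 1 - 2 = m - 1 from rfl] at this ⊢
  exact this
end

section
/- Let f : Ω → H be a left slice hyperholomorphic function on a connected axially symmetric open set Ω ⊆ H containing a real point, and suppose f admits a convergent power series expansion f(q) = ∑_{k≥0} q^k α_k on a ball B_r(0) ⊆ Ω. If D̄ f = 0 on Ω (with D̄ applied via its closed-form action D̄(q^k) = 2(k q^{k-1} + ∑_{s=1}^{k} q^{k-s} q̄^{s-1}) on monomials), then α_k = 0 for all k ≥ 1, i.e. f is constant. -/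
open scoped Quaternion

private lemma real_hasSum (r : ℝ) (α : ℕ → ℍ[ℝ])
    (hker : ∀ q : ℍ[ℝ], ‖q‖ < r →
      HasSum (fun m : ℕ =>
        (((m + 1 : ℕ) : ℍ[ℝ]) * q ^ m +
          ∑ s ∈ Finset.range (m + 1), q ^ (m - s) * (star q) ^ s) * α (m + 1)) 0)
    (x : ℝ) (hx : |x| < r) :
    HasSum (fun m : ℕ => x ^ m • ((2 * (m + 1) : ℝ) • α (m + 1))) 0 := by
  have hq : ‖((x : ℍ[ℝ]))‖ < r := by rwa [Quaternion.norm_coe, Real.norm_eq_abs]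
  have h := hker (x : ℍ[ℝ]) hq
  refine h.congr_fun fun m => ?_
  have hsum : (∑ s ∈ Finset.range (m + 1),
      ((x : ℍ[ℝ])) ^ (m - s) * (star (x : ℍ[ℝ])) ^ s) = ((m + 1 : ℕ) : ℍ[ℝ]) * (x : ℍ[ℝ]) ^ m := by
    rw [Quaternion.star_coe]
    have : ∀ s ∈ Finset.range (m + 1),
        ((x : ℍ[ℝ])) ^ (m - s) * ((x : ℍ[ℝ])) ^ s = ((x : ℍ[ℝ])) ^ m := by
      intro s hs
      rw [← pow_add, Nat.sub_add_cancel (Nat.lt_succ_iff.mp (Finset.mem_range.mp hs))]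
    rw [Finset.sum_congr rfl this, Finset.sum_const, Finset.card_range, nsmul_eq_mul]
  rw [hsum, smul_smul, ← two_mul]
  have hc : (2 : ℍ[ℝ]) * (((m + 1 : ℕ) : ℍ[ℝ]) * (x : ℍ[ℝ]) ^ m)
      = (((x ^ m * (2 * ((m : ℝ) + 1))) : ℝ) : ℍ[ℝ]) := by
    have h2 : (2 : ℍ[ℝ]) = ((2 : ℝ) : ℍ[ℝ]) := by norm_cast
    have hm : ((m + 1 : ℕ) : ℍ[ℝ]) = (((m + 1 : ℕ) : ℝ) : ℍ[ℝ]) := by norm_cast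
    rw [← Quaternion.coe_pow, h2, hm, ← Quaternion.coe_mul, ← Quaternion.coe_mul]
    congr 1
    push_cast
    ring
  rw [hc, Quaternion.coe_mul_eq_smul]

/-- If a convergent quaternionic power series `f(q) = ∑_{k≥0} q^k α_k` on a ball `B_r(0)`
satisfies `D̄ f = 0` there — i.e., using the closed form
`D̄(q^k) = 2 (k q^{k-1} + ∑_{s=1}^{k} q^{k-s} q̄^{s-1})`, the series
`∑_{k≥1} (k q^{k-1} + ∑_{s=1}^{k} q^{k-s} q̄^{s-1}) α_k` sums to `0` for every `q` with
`‖q‖ < r` — then `α_k = 0` for all `k ≥ 1`, i.e. `f` is constant. -/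
theorem dbar_kernel_power_series_constant (r : ℝ) (hr : 0 < r) (α : ℕ → ℍ[ℝ])
    (hconv : ∀ q : ℍ[ℝ], ‖q‖ < r →
      Summable (fun k : ℕ => q ^ k * α k))
    (hker : ∀ q : ℍ[ℝ], ‖q‖ < r →
      HasSum (fun m : ℕ =>
        (((m + 1 : ℕ) : ℍ[ℝ]) * q ^ m +
          ∑ s ∈ Finset.range (m + 1), q ^ (m - s) * (star q) ^ s) * α (m + 1)) 0) :
    ∀ k : ℕ, 1 ≤ k → α k = 0 := by
  set β : ℕ → ℍ[ℝ] := fun m => (2 * (m + 1) : ℝ) • α (m + 1) with hβ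
  have key : ∀ x : ℝ, |x| < r → HasSum (fun m : ℕ => x ^ m • β m) 0 :=
    fun x hx => real_hasSum r α hker x hx
  -- the formal power series with coefficients β
  set p : FormalMultilinearSeries ℝ ℝ ℍ[ℝ] :=
    fun n => ContinuousMultilinearMap.mkPiRing ℝ (Fin n) (β n) with hp
  have hpapply : ∀ n (y : ℝ), (p n fun _ => y) = y ^ n • β n := by
    intro n y
    simp [hp, ContinuousMultilinearMap.mkPiRing_apply]
  -- radius bound
  have half_pos : (0 : ℝ) < r / 2 := by linarith
  have hsummable : Summable (fun n => ‖p n‖ * (r / 2) ^ n) := by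
    have h := (key (r / 2) (by rw [abs_of_pos half_pos]; linarith)).summable
    have h2 : Summable (fun n : ℕ => ‖(r / 2) ^ n • β n‖) := summable_norm_iff.mpr h
    refine h2.congr fun n => ?_
    rw [norm_smul, ContinuousMultilinearMap.norm_mkPiRing, Real.norm_eq_abs,
      abs_of_pos (pow_pos half_pos n), mul_comm]
  have hrad : ENNReal.ofReal (r / 2) ≤ p.radius := by
    have := p.le_radius_of_summable_norm (r := ⟨r / 2, half_pos.le⟩) hsummable
    rwa [ENNReal.ofReal_eq_coe_nnreal half_pos.le]
  have hball : HasFPowerSeriesOnBall (fun _ : ℝ => (0 : ℍ[ℝ])) p 0 (ENNReal.ofReal (r / 2)) := by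
    refine ⟨hrad, by simpa using half_pos, ?_⟩
    intro y hy
    rw [EMetric.mem_ball, edist_lt_ofReal, dist_zero_right] at hy
    have : HasSum (fun m : ℕ => y ^ m • β m) 0 := by
      refine key y ?_
      rw [Real.norm_eq_abs] at hy
      linarith
    simpa [hpapply] using this
  have hzero : ∀ n, β n = 0 := by
    intro n
    have := hball.hasFPowerSeriesAt.apply_eq_zero n 1
    rwa [hpapply, one_pow, one_smul] at this
  intro k hk
  obtain ⟨m, rfl⟩ := Nat.exists_eq_add_of_le hk
  have h := hzero m
  rw [hβ] at h
  have h2 : (2 * (m + 1) : ℝ) ≠ 0 := by positivity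
  have := (smul_eq_zero.mp h).resolve_left h2
  simpa [add_comm] using this
end

section
/- Let p, s be quaternions with p ∉ [s] (p not in the 2-sphere of s). Define the commutative pseudo Cauchy kernel Q_{c,s}(p)^{-1} = (s² - 2 Re(p) s + |p|²)^{-1}, the left Cauchy kernel S_L^{-1}(s,p) = (s - p̄) Q_{c,s}(p)^{-1}, and the F-kernel F_L(s,p) = -4 (s - p̄) Q_{c,s}(p)^{-2}. Then F_L(s,p)·s - p·F_L(s,p) = -4 Q_{c,s}(p)^{-1}. -/
open scoped Quaternion

/-- The 2-sphere `[s] = {x : Re x = Re s, ‖Im x‖ = ‖Im s‖}` associated to a quaternion. -/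
def qSphere (s : ℍ[ℝ]) : Set ℍ[ℝ] := {x | x.re = s.re ∧ ‖x.im‖ = ‖s.im‖}

/-- The commutative pseudo Cauchy kernel denominator `Q_{c,s}(p) = s² - 2 Re(p) s + |p|²`. -/
noncomputable def Qc (s p : ℍ[ℝ]) : ℍ[ℝ] :=
  s ^ 2 - 2 * ((p.re : ℝ) : ℍ[ℝ]) * s + ((Quaternion.normSq p : ℝ) : ℍ[ℝ])

/-- The left slice hyperholomorphic Cauchy kernel `S_L^{-1}(s,p) = (s - p̄) Q_{c,s}(p)^{-1}`. -/
noncomputable def SLinv (s p : ℍ[ℝ]) : ℍ[ℝ] := (s - star p) * (Qc s p)⁻¹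

/-- The left `F`-kernel `F_L(s,p) = -4 (s - p̄) Q_{c,s}(p)^{-2}`. -/
noncomputable def FL (s p : ℍ[ℝ]) : ℍ[ℝ] := -4 * (s - star p) * ((Qc s p)⁻¹) ^ 2

open Quaternion in
/-- If `p ∉ [s]` then the pseudo Cauchy kernel denominator is nonzero. -/
lemma qc_ne_zero_aux (s p : ℍ[ℝ]) (h : p ∉ qSphere s) : Qc s p ≠ 0 := by
  intro hQ
  have him : ‖p.im‖ ^ 2 = p.imI ^ 2 + p.imJ ^ 2 + p.imK ^ 2 := by
    rw [sq, ← normSq_eq_norm_mul_self, normSq_def']; simp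
  have him' : ‖s.im‖ ^ 2 = s.imI ^ 2 + s.imJ ^ 2 + s.imK ^ 2 := by
    rw [sq, ← normSq_eq_norm_mul_self, normSq_def']; simp
  have hc : (2 : ℍ[ℝ]) * ((p.re : ℝ) : ℍ[ℝ]) = ((2 * p.re : ℝ) : ℍ[ℝ]) := by
    ext <;> simp [Quaternion.re_mul, Quaternion.imI_mul, Quaternion.imJ_mul, Quaternion.imK_mul,
      show ((2:ℍ[ℝ])).re = 2 from rfl, show ((2:ℍ[ℝ])).imI = 0 from rfl,
      show ((2:ℍ[ℝ])).imJ = 0 from rfl, show ((2:ℍ[ℝ])).imK = 0 from rfl]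
  rw [Qc, hc, Quaternion.ext_iff] at hQ
  simp only [pow_two, Quaternion.re_mul, Quaternion.imI_mul, Quaternion.imJ_mul,
    Quaternion.imK_mul, Quaternion.re_sub, Quaternion.re_add, Quaternion.imI_sub,
    Quaternion.imI_add, Quaternion.imJ_sub, Quaternion.imJ_add, Quaternion.imK_sub,
    Quaternion.imK_add, Quaternion.re_coe, Quaternion.imI_coe, Quaternion.imJ_coe,
    Quaternion.imK_coe, Quaternion.re_zero, Quaternion.imI_zero, Quaternion.imJ_zero,
    Quaternion.imK_zero, normSq_def'] at hQ
  obtain ⟨h1, h2, h3, h4⟩ := hQ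
  simp only [qSphere, Set.mem_setOf_eq, not_and] at h
  by_cases hre : p.re = s.re
  · apply h hre
    have hsq : ‖p.im‖ ^ 2 = ‖s.im‖ ^ 2 := by rw [him, him']; nlinarith [h1]
    rw [← Real.sqrt_sq (norm_nonneg p.im), ← Real.sqrt_sq (norm_nonneg s.im), hsq]
  · have hne : s.re - p.re ≠ 0 := sub_ne_zero.mpr (fun hh => hre hh.symm)
    have hi : s.imI = 0 :=
      (mul_eq_zero.mp (show s.imI * (s.re - p.re) = 0 by linear_combination h2/2)).resolve_right hne
    have hj : s.imJ = 0 :=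
      (mul_eq_zero.mp (show s.imJ * (s.re - p.re) = 0 by linear_combination h3/2)).resolve_right hne
    have hk : s.imK = 0 :=
      (mul_eq_zero.mp (show s.imK * (s.re - p.re) = 0 by linear_combination h4/2)).resolve_right hne
    have hpos : (s.re - p.re) ^ 2 > 0 := by positivity
    rw [hi, hj, hk] at h1
    nlinarith [h1, hpos, sq_nonneg p.imI, sq_nonneg p.imJ, sq_nonneg p.imK]

open Quaternion in
/-- For quaternions `p ∉ [s]`, one has `F_L(s,p)·s - p·F_L(s,p) = -4 Q_{c,s}(p)^{-1}`. -/
theorem FL_mul_s_sub_p_mul_FL (s p : ℍ[ℝ]) (h : p ∉ qSphere s) :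
    FL s p * s - p * FL s p = -4 * (Qc s p)⁻¹ := by
  have hQ : Qc s p ≠ 0 := qc_ne_zero_aux s p h
  have hc : (2 : ℍ[ℝ]) * ((p.re : ℝ) : ℍ[ℝ]) = ((2 * p.re : ℝ) : ℍ[ℝ]) := by
    ext <;> simp [Quaternion.re_mul, Quaternion.imI_mul, Quaternion.imJ_mul, Quaternion.imK_mul,
      show ((2:ℍ[ℝ])).re = 2 from rfl, show ((2:ℍ[ℝ])).imI = 0 from rfl,
      show ((2:ℍ[ℝ])).imJ = 0 from rfl, show ((2:ℍ[ℝ])).imK = 0 from rfl]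
  have hQc' : Qc s p = s ^ 2 - ((2 * p.re : ℝ) : ℍ[ℝ]) * s + ((normSq p : ℝ) : ℍ[ℝ]) := by
    rw [Qc, hc]
  have hcomm : Commute s (Qc s p) := by
    rw [hQc']
    exact (((Commute.refl s).pow_right 2).sub_right
      ((coe_commute (2 * p.re) s).symm.mul_right (Commute.refl s))).add_right
      (coe_commute _ s).symm
  have hinv : Commute s ((Qc s p)⁻¹) := hcomm.inv_right₀
  have key : (s - star p) * s - p * (s - star p) = Qc s p := by
    have h1 : p + star p = ((2 * p.re : ℝ) : ℍ[ℝ]) := Quaternion.self_add_star' p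
    have h2 : p * star p = ((normSq p : ℝ) : ℍ[ℝ]) := Quaternion.self_mul_star p
    have expand : (s - star p) * s - p * (s - star p)
        = s ^ 2 - (p + star p) * s + p * star p := by noncomm_ring
    rw [expand, h1, h2, hQc']
  have e : s * ((Qc s p)⁻¹) ^ 2 = ((Qc s p)⁻¹) ^ 2 * s := (hinv.pow_right 2).eq
  calc FL s p * s - p * FL s p
      = -4 * (s - star p) * (((Qc s p)⁻¹) ^ 2 * s) - p * (-4 * (s - star p) * ((Qc s p)⁻¹) ^ 2) := by
        rw [FL, mul_assoc]
    _ = -4 * ((s - star p) * s - p * (s - star p)) * ((Qc s p)⁻¹) ^ 2 := by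
        rw [← e]; noncomm_ring
    _ = -4 * Qc s p * ((Qc s p)⁻¹) ^ 2 := by rw [key]
    _ = -4 * (Qc s p)⁻¹ := by
        rw [sq, show (-4 : ℍ[ℝ]) * Qc s p * ((Qc s p)⁻¹ * (Qc s p)⁻¹)
          = -4 * (Qc s p * (Qc s p)⁻¹) * (Qc s p)⁻¹ by noncomm_ring,
          mul_inv_cancel₀ hQ, mul_one]
end

section
/- Let s, p be quaternions with p ∉ [s] and |p| < |s|. Then the P₂-kernel admits the series expansion P₂^L(s,p) = 2 ∑_{n=1}^{∞} ( n p^{n-1} + ∑_{j=1}^{n} p^{n-j} p̄^{j-1} ) s^{-1-n}, and the series converges absolutely. -/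
open scoped Quaternion

/-- `P₂^L(s,p) = -F_L(s,p)·s + p₀·F_L(s,p)`, `p₀ = Re p`. -/
noncomputable def P2L (s p : ℍ[ℝ]) : ℍ[ℝ] :=
  -(FL s p * s) + ((p.re : ℝ) : ℍ[ℝ]) * FL s p

/- ### Auxiliary lemmas -/

theorem charPoly (p : ℍ[ℝ]) :
    p ^ 2 - 2 * ((p.re : ℝ) : ℍ[ℝ]) * p + ((Quaternion.normSq p : ℝ) : ℍ[ℝ]) = 0 := by
  have h1 : ((Quaternion.normSq p : ℝ) : ℍ[ℝ]) = p * star p := (Quaternion.self_mul_star p).symm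
  have h2 : p + star p = ((2 * p.re : ℝ) : ℍ[ℝ]) := Quaternion.self_add_star' p
  have h3 : 2 * ((p.re : ℝ) : ℍ[ℝ]) * p = p * (p + star p) := by
    rw [h2, ← Quaternion.coe_commutes, Quaternion.coe_mul]
    rw [show ((2:ℝ):ℍ[ℝ]) = (2:ℍ[ℝ]) from rfl]
    noncomm_ring
    rw [Quaternion.coe_commutes]
  rw [h1, sq, h3]; noncomm_ring

set_option maxHeartbeats 1000000 in
theorem Qc_ne_zero (s p : ℍ[ℝ]) (h1 : p ∉ qSphere s) : Qc s p ≠ 0 := by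
  intro hQ
  apply h1
  rw [Qc, show (2:ℍ[ℝ]) * ((p.re:ℝ):ℍ[ℝ]) * s = ((2*p.re : ℝ):ℍ[ℝ]) * s by
    rw [Quaternion.coe_mul, show ((2:ℝ):ℍ[ℝ]) = (2:ℍ[ℝ]) from rfl]] at hQ
  have h := Quaternion.ext_iff.mp hQ
  simp only [sq, Quaternion.re_add, Quaternion.re_sub, Quaternion.re_mul,
    Quaternion.imI_add, Quaternion.imI_sub, Quaternion.imI_mul,
    Quaternion.imJ_add, Quaternion.imJ_sub, Quaternion.imJ_mul,
    Quaternion.imK_add, Quaternion.imK_sub, Quaternion.imK_mul,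
    Quaternion.re_coe, Quaternion.imI_coe, Quaternion.imJ_coe, Quaternion.imK_coe,
    Quaternion.re_zero, Quaternion.imI_zero, Quaternion.imJ_zero, Quaternion.imK_zero,
    Quaternion.normSq_def'] at h
  obtain ⟨e0, e1, e2, e3⟩ := h
  set a := s.re with ha; set b := s.imI; set c := s.imJ; set d := s.imK
  set x := p.re; set y := p.imI; set z := p.imJ; set w := p.imK
  have hb : b * (a - x) = 0 := by linear_combination e1 / 2
  have hc : c * (a - x) = 0 := by linear_combination e2 / 2
  have hd : d * (a - x) = 0 := by linear_combination e3 / 2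
  have E : (a - x)^2 * ((a - x)^2 + (y^2 + z^2 + w^2)) = 0 := by
    linear_combination (a - x)^2 * e0 + (b*(a-x))*hb + (c*(a-x))*hc + (d*(a-x))*hd
  have hax : a = x := by
    have h4 : (a - x)^2 = 0 := by
      nlinarith [E, sq_nonneg (a - x), sq_nonneg y, sq_nonneg z, sq_nonneg w, sq_nonneg ((a-x)^2)]
    have := pow_eq_zero_iff (n := 2) (by norm_num) |>.mp h4
    linarith [sub_eq_zero.mp this]
  have him : y^2 + z^2 + w^2 = b^2 + c^2 + d^2 := by
    rw [hax] at e0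
    linear_combination e0
  refine ⟨hax.symm, ?_⟩
  have hns : Quaternion.normSq p.im = Quaternion.normSq s.im := by
    simp only [Quaternion.normSq_def', Quaternion.re_im, Quaternion.imI_im, Quaternion.imJ_im,
      Quaternion.imK_im]
    linear_combination him
  have h2 : ‖p.im‖ * ‖p.im‖ = ‖s.im‖ * ‖s.im‖ := by
    rw [← Quaternion.normSq_eq_norm_mul_self, ← Quaternion.normSq_eq_norm_mul_self, hns]
  nlinarith [norm_nonneg p.im, norm_nonneg s.im, h2]

theorem summable_geom (s x : ℍ[ℝ]) (hx : ‖x‖ < ‖s‖) :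
    Summable (fun n : ℕ => x ^ n * (s⁻¹) ^ (n + 1)) := by
  have hspos : (0:ℝ) < ‖s‖ := lt_of_le_of_lt (norm_nonneg x) hx
  have hr : ‖x‖ * ‖s‖⁻¹ < 1 := by
    rw [← div_eq_mul_inv, div_lt_one hspos]; exact hx
  apply Summable.of_norm
  have : ∀ n : ℕ, ‖x ^ n * (s⁻¹) ^ (n + 1)‖ = ‖s‖⁻¹ * (‖x‖ * ‖s‖⁻¹) ^ n := by
    intro n
    rw [norm_mul, norm_pow, norm_pow, norm_inv, mul_pow, pow_succ]
    ring
  simp only [this]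
  exact (summable_geometric_of_lt_one (by positivity) hr).mul_left _

theorem cauchy_sum (s x : ℍ[ℝ]) (hx : ‖x‖ < ‖s‖) (hQ : Qc s x ≠ 0) :
    HasSum (fun n : ℕ => x ^ n * (s⁻¹) ^ (n + 1)) ((s - star x) * (Qc s x)⁻¹) := by
  have hs0 : s ≠ 0 := by
    intro h; rw [h, norm_zero] at hx; exact absurd hx (not_lt.mpr (norm_nonneg x))
  have hsum := summable_geom s x hx
  set K := ∑' n : ℕ, x ^ n * (s⁻¹) ^ (n + 1) with hK
  have hKsum : HasSum (fun n : ℕ => x ^ n * (s⁻¹) ^ (n + 1)) K := hsum.hasSum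
  have hKs : HasSum (fun n : ℕ => x ^ n * (s⁻¹) ^ n) (K * s) := by
    have := hKsum.mul_right s
    convert this using 2 with n
    · rfl
    rw [mul_assoc, pow_succ, mul_assoc, inv_mul_cancel₀ hs0, mul_one]
  have hxK : HasSum (fun n : ℕ => x ^ (n+1) * (s⁻¹) ^ (n + 1)) (x * K) := by
    have := hKsum.mul_left x
    convert this using 2 with n
    · rfl
    rw [← mul_assoc, ← pow_succ']
  have hshift : K * s = 1 + x * K := by
    have h0 := (hasSum_nat_add_iff' (f := fun n : ℕ => x ^ n * (s⁻¹) ^ n) 1).mpr hKs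
    have h0' : x * K = K * s - 1 := hxK.unique (by simpa using h0)
    rw [h0']; noncomm_ring
  set r2 : ℍ[ℝ] := ((2 * x.re : ℝ) : ℍ[ℝ]) with hr2def
  set ns : ℍ[ℝ] := ((Quaternion.normSq x : ℝ) : ℍ[ℝ]) with hnsdef
  have hcoe2 : (2:ℍ[ℝ]) * ((x.re : ℝ) : ℍ[ℝ]) = r2 := by
    rw [hr2def, Quaternion.coe_mul, show ((2:ℝ):ℍ[ℝ]) = (2:ℍ[ℝ]) from rfl]
  have hQc' : Qc s x = s^2 - r2*s + ns := by rw [Qc, hcoe2]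
  have hchar' : x^2 - r2*x + ns = 0 := by rw [← hcoe2]; exact charPoly x
  have hr2c : K * r2 = r2 * K := (Quaternion.coe_commutes _ _).symm
  have hnsc : K * ns = ns * K := (Quaternion.coe_commutes _ _).symm
  have hstar : star x = r2 - x := by
    have := Quaternion.self_add_star' x
    rw [← hr2def] at this
    linear_combination (norm := noncomm_ring) this
  have e1 : K * s^2 = s + x + x^2*K := by
    calc K * s^2 = (K*s)*s := by noncomm_ring
    _ = (1 + x*K)*s := by rw [hshift]
    _ = s + x*(K*s) := by noncomm_ring
    _ = s + x*(1 + x*K) := by rw [hshift]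
    _ = s + x + x^2*K := by noncomm_ring
  have hKQ : K * Qc s x = s - star x := by
    calc K * Qc s x = K*s^2 - (K*r2)*s + K*ns := by rw [hQc']; noncomm_ring
    _ = (s + x + x^2*K) - r2*(K*s) + ns*K := by rw [e1, hr2c, hnsc, mul_assoc]
    _ = (s + x + x^2*K) - r2*(1 + x*K) + ns*K := by rw [hshift]
    _ = (s + x - r2) + (x^2 - r2*x + ns)*K := by noncomm_ring
    _ = (s + x - r2) := by rw [hchar']; noncomm_ring
    _ = s - star x := by rw [hstar]; noncomm_ring
  have hKeq : K = (s - star x) * (Qc s x)⁻¹ := by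
    rw [eq_mul_inv_iff_mul_eq₀ hQ]; exact hKQ
  rw [← hKeq]
  exact hKsum

/-- The series coefficient. -/
noncomputable def cQ (p : ℍ[ℝ]) (m : ℕ) : ℍ[ℝ] :=
  ((m + 1 : ℕ) : ℍ[ℝ]) * p ^ m + ∑ j ∈ Finset.range (m + 1), p ^ (m - j) * (star p) ^ j

theorem cQ_zero (p : ℍ[ℝ]) : cQ p 0 = 2 := by
  simp [cQ]
  norm_num

theorem cQ_rec (p : ℍ[ℝ]) (m : ℕ) :
    cQ p (m+1) = p * cQ p m + p ^ (m+1) + (star p) ^ (m+1) := by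
  rw [cQ, cQ]
  rw [Finset.sum_range_succ, mul_add, Finset.mul_sum]
  have hs : ∀ j ∈ Finset.range (m+1),
      p * (p ^ (m - j) * (star p) ^ j) = p ^ (m + 1 - j) * (star p) ^ j := by
    intro j hj; rw [Finset.mem_range] at hj
    rw [← mul_assoc, ← pow_succ']
    congr 2
    omega
  rw [Finset.sum_congr rfl hs]
  have hcomm : Commute (((m+1:ℕ) : ℍ[ℝ])) p := (Nat.cast_commute _ _)
  have h1 : p * (((m+1:ℕ) : ℍ[ℝ]) * p ^ m) = ((m+1:ℕ) : ℍ[ℝ]) * p ^ (m+1) := by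
    rw [← mul_assoc, ← hcomm.eq, mul_assoc, ← pow_succ']
  have h2 : ((m + 1 + 1 : ℕ) : ℍ[ℝ]) = ((m+1:ℕ) : ℍ[ℝ]) + 1 := Nat.cast_succ (m+1)
  rw [h1, h2]
  rw [Nat.sub_self, pow_zero, one_mul]
  noncomm_ring

theorem cQ_norm (p : ℍ[ℝ]) (m : ℕ) : ‖cQ p m‖ ≤ 2 * (m+1) * ‖p‖^m := by
  rw [cQ]
  refine (norm_add_le _ _).trans ?_
  have hA : ‖((m + 1 : ℕ) : ℍ[ℝ]) * p ^ m‖ = (m+1) * ‖p‖^m := by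
    rw [norm_mul, norm_pow, ← Quaternion.coe_natCast, Quaternion.norm_coe, Real.norm_natCast]
    push_cast
    ring
  have hB : ‖∑ j ∈ Finset.range (m + 1), p ^ (m - j) * (star p) ^ j‖ ≤ (m+1) * ‖p‖^m := by
    refine (norm_sum_le _ _).trans ?_
    have he : ∀ j ∈ Finset.range (m+1), ‖p ^ (m - j) * (star p) ^ j‖ = ‖p‖^m := by
      intro j hj; rw [Finset.mem_range] at hj
      rw [norm_mul, norm_pow, norm_pow, norm_star, ← pow_add]
      congr 1
      omega
    rw [Finset.sum_congr rfl he, Finset.sum_const, Finset.card_range, nsmul_eq_mul]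
    push_cast
    exact le_refl _
  nlinarith [hA, hB]

set_option maxHeartbeats 2000000 in
/-- For `p ∉ [s]` with `|p| < |s|`, the `P₂`-kernel has the absolutely convergent expansion
`P₂^L(s,p) = 2 ∑_{n≥1} (n p^{n-1} + ∑_{j=1}^n p^{n-j} p̄^{j-1}) s^{-1-n}`
(here the series is indexed by `m = n - 1`). -/
theorem P2L_series_expansion (s p : ℍ[ℝ]) (h1 : p ∉ qSphere s) (h2 : ‖p‖ < ‖s‖) :
    HasSum (fun m : ℕ =>
        2 * (((m + 1 : ℕ) : ℍ[ℝ]) * p ^ m +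
          ∑ j ∈ Finset.range (m + 1), p ^ (m - j) * (star p) ^ j) * (s⁻¹) ^ (m + 2))
      (P2L s p) ∧
    Summable (fun m : ℕ =>
        ‖2 * (((m + 1 : ℕ) : ℍ[ℝ]) * p ^ m +
          ∑ j ∈ Finset.range (m + 1), p ^ (m - j) * (star p) ^ j) * (s⁻¹) ^ (m + 2)‖) := by
  have hs0 : s ≠ 0 := by
    intro h; rw [h, norm_zero] at h2; exact absurd h2 (not_lt.mpr (norm_nonneg p))
  have hQ : Qc s p ≠ 0 := Qc_ne_zero s p h1
  have hspos : (0:ℝ) < ‖s‖ := lt_of_le_of_lt (norm_nonneg p) h2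
  have hgoalf : (fun m : ℕ =>
      2 * (((m + 1 : ℕ) : ℍ[ℝ]) * p ^ m +
        ∑ j ∈ Finset.range (m + 1), p ^ (m - j) * (star p) ^ j) * (s⁻¹) ^ (m + 2))
      = (fun m : ℕ => 2 * cQ p m * (s⁻¹) ^ (m + 2)) := rfl
  rw [hgoalf]
  set f : ℕ → ℍ[ℝ] := fun m => 2 * cQ p m * (s⁻¹) ^ (m + 2) with hf
  -- summability
  have hr : ‖p‖ * ‖s⁻¹‖ < 1 := by
    rw [norm_inv, ← div_eq_mul_inv, div_lt_one hspos]; exact h2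
  have hrnn : (0:ℝ) ≤ ‖p‖ * ‖s⁻¹‖ := by positivity
  have hbound : ∀ m : ℕ, ‖f m‖ ≤ 4 * ‖s⁻¹‖^2 * ((m+1) * (‖p‖*‖s⁻¹‖)^m) := by
    intro m
    have h2n : ‖(2:ℍ[ℝ])‖ = 2 := by
      rw [show (2:ℍ[ℝ]) = ((2:ℝ):ℍ[ℝ]) from rfl, Quaternion.norm_coe]; norm_num
    have hfm : ‖f m‖ = 2 * ‖cQ p m‖ * ‖s⁻¹‖^(m+2) := by
      simp only [hf]; rw [norm_mul, norm_mul, norm_pow, h2n]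
    rw [hfm]
    have hc := cQ_norm p m
    have hq2 : ‖s⁻¹‖^(m+2) = ‖s⁻¹‖^2 * ‖s⁻¹‖^m := by rw [← pow_add]; ring_nf
    calc 2 * ‖cQ p m‖ * ‖s⁻¹‖^(m+2) ≤ 2 * (2*(m+1)*‖p‖^m) * ‖s⁻¹‖^(m+2) := by
          have hnn : (0:ℝ) ≤ ‖s⁻¹‖^(m+2) := by positivity
          nlinarith [norm_nonneg (cQ p m)]
      _ = 4 * ‖s⁻¹‖^2 * ((m+1) * (‖p‖*‖s⁻¹‖)^m) := by rw [mul_pow, hq2]; ring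
  have hmaj : Summable (fun m : ℕ => 4 * ‖s⁻¹‖^2 * ((m+1) * (‖p‖*‖s⁻¹‖)^m)) := by
    apply Summable.mul_left
    have hg := summable_geometric_of_lt_one hrnn hr
    have hpm : Summable (fun m : ℕ => (m:ℝ) * (‖p‖*‖s⁻¹‖)^m) := by
      have := summable_pow_mul_geometric_of_norm_lt_one (R := ℝ) 1
        (by rwa [Real.norm_of_nonneg hrnn])
      simpa using this
    apply (hpm.add hg).congr
    intro m; ring
  have hnormsum : Summable (fun m => ‖f m‖) :=
    Summable.of_nonneg_of_le (fun m => norm_nonneg _) hbound hmaj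
  have hfsum : Summable f := hnormsum.of_norm
  refine ⟨?_, hnormsum⟩
  set T := ∑' m, f m with hTdef
  have hTsum : HasSum f T := hfsum.hasSum
  -- the two Cauchy kernels
  have hKsum : HasSum (fun n : ℕ => p ^ n * (s⁻¹)^(n+1)) ((s - star p) * (Qc s p)⁻¹) :=
    cauchy_sum s p h2 hQ
  have hQs : Qc s (star p) = Qc s p := by
    rw [Qc, Qc, Quaternion.re_star, Quaternion.normSq_star]
  have hK'sum : HasSum (fun n : ℕ => (star p) ^ n * (s⁻¹)^(n+1)) ((s - p) * (Qc s p)⁻¹) := by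
    have := cauchy_sum s (star p) (by rwa [norm_star]) (by rwa [hQs])
    rwa [hQs, star_star] at this
  set K : ℍ[ℝ] := (s - star p) * (Qc s p)⁻¹ with hKdef
  set K' : ℍ[ℝ] := (s - p) * (Qc s p)⁻¹ with hK'def
  set M : ℍ[ℝ] := 2*K + 2*K' with hMdef
  -- multiply the series by s on the right
  have hmuls : ∀ m : ℕ, f m * s = 2 * cQ p m * (s⁻¹)^(m+1) := by
    intro m
    simp only [hf]
    rw [mul_assoc (2 * cQ p m), pow_succ, mul_assoc ((s⁻¹)^(m+1)), inv_mul_cancel₀ hs0,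
      mul_one]
  have hFs : HasSum (fun m => 2 * cQ p m * (s⁻¹)^(m+1)) (T * s) := by
    have := hTsum.mul_right s
    simp only [hmuls] at this
    exact this
  have hFshift := (hasSum_nat_add_iff' (f := fun m => 2 * cQ p m * (s⁻¹)^(m+1)) 1).mpr hFs
  have hKshift := (hasSum_nat_add_iff' (f := fun n => p^n*(s⁻¹)^(n+1)) 1).mpr hKsum
  have hK'shift := (hasSum_nat_add_iff' (f := fun n => (star p)^n*(s⁻¹)^(n+1)) 1).mpr hK'sum
  have hpT : HasSum (fun m => p * f m) (p * T) := hTsum.mul_left p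
  have hRHS := hpT.add ((hKshift.mul_left 2).add (hK'shift.mul_left 2))
  have hfun : ∀ m : ℕ, 2 * cQ p (m+1) * (s⁻¹)^(m+1+1)
      = p * f m + (2 * (p^(m+1) * (s⁻¹)^(m+1+1)) + 2 * ((star p)^(m+1) * (s⁻¹)^(m+1+1))) := by
    intro m
    rw [cQ_rec]
    simp only [hf]
    rw [show m+2 = m+1+1 from rfl]
    noncomm_ring
  have huniq : T * s - (∑ i ∈ Finset.range 1, 2 * cQ p i * (s⁻¹)^(i+1))
      = p * T + (2*(K - ∑ i ∈ Finset.range 1, p^i*(s⁻¹)^(i+1))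
        + 2*(K' - ∑ i ∈ Finset.range 1, (star p)^i*(s⁻¹)^(i+1))) := by
    refine hFshift.unique ?_
    rw [funext hfun]
    exact hRHS
  simp only [Finset.sum_range_one, cQ_zero, pow_zero, pow_one, one_mul, zero_add] at huniq
  have hTs : T * s = p * T + M := by
    rw [hMdef]
    linear_combination (norm := noncomm_ring) huniq
  -- now the algebra: T * Qc = M*s - star p * M
  have hQcdef : Qc s p = s^2 - 2*((p.re:ℝ):ℍ[ℝ])*s + ((Quaternion.normSq p : ℝ):ℍ[ℝ]) := rfl
  have hchar := charPoly p
  have hprA : ∀ a : ℍ[ℝ], ((p.re:ℝ):ℍ[ℝ]) * a = a * ((p.re:ℝ):ℍ[ℝ]) :=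
    fun a => Quaternion.coe_commutes _ _
  have hnsA : ∀ a : ℍ[ℝ], ((Quaternion.normSq p : ℝ):ℍ[ℝ]) * a
      = a * ((Quaternion.normSq p : ℝ):ℍ[ℝ]) := fun a => Quaternion.coe_commutes _ _
  have e1 : T*s^2 = p*(p*T+M) + M*s := by
    calc T*s^2 = (T*s)*s := by noncomm_ring
    _ = (p*T+M)*s := by rw [hTs]
    _ = p*(T*s) + M*s := by noncomm_ring
    _ = p*(p*T+M) + M*s := by rw [hTs]
  have hstar2 : p - 2*((p.re:ℝ):ℍ[ℝ]) = -star p := by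
    have h := Quaternion.self_add_star p
    linear_combination (norm := noncomm_ring) h
  have hTQ : T * Qc s p = M*s - star p * M := by
    calc T * Qc s p
        = T*s^2 - 2*((T*((p.re:ℝ):ℍ[ℝ]))*s) + T*((Quaternion.normSq p : ℝ):ℍ[ℝ]) := by
          rw [hQcdef]; noncomm_ring
    _ = T*s^2 - 2*((((p.re:ℝ):ℍ[ℝ])*T)*s) + ((Quaternion.normSq p : ℝ):ℍ[ℝ])*T := by
          rw [← hprA T, ← hnsA T]
    _ = T*s^2 - 2*(((p.re:ℝ):ℍ[ℝ])*(T*s)) + ((Quaternion.normSq p : ℝ):ℍ[ℝ])*T := by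
          noncomm_ring
    _ = (p*(p*T+M) + M*s) - 2*(((p.re:ℝ):ℍ[ℝ])*(p*T+M)) + ((Quaternion.normSq p : ℝ):ℍ[ℝ])*T := by
          rw [e1, hTs]
    _ = (p^2 - 2*((p.re:ℝ):ℍ[ℝ])*p + ((Quaternion.normSq p : ℝ):ℍ[ℝ]))*T
          + (M*s + (p - 2*((p.re:ℝ):ℍ[ℝ]))*M) := by noncomm_ring
    _ = M*s + (p - 2*((p.re:ℝ):ℍ[ℝ]))*M := by rw [hchar]; noncomm_ring
    _ = M*s - star p * M := by rw [hstar2]; noncomm_ring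
  -- closed form for M
  have hsp : star p = 2*((p.re:ℝ):ℍ[ℝ]) - p := by
    have h := Quaternion.self_add_star p
    linear_combination (norm := noncomm_ring) h
  have hM : M = 4*((s - ((p.re:ℝ):ℍ[ℝ]))*(Qc s p)⁻¹) := by
    calc M = (2*(s - star p) + 2*(s - p))*(Qc s p)⁻¹ := by
          rw [hMdef, hKdef, hK'def]; noncomm_ring
    _ = (2*(s - (2*((p.re:ℝ):ℍ[ℝ]) - p)) + 2*(s - p))*(Qc s p)⁻¹ := by rw [← hsp]
    _ = 4*((s - ((p.re:ℝ):ℍ[ℝ]))*(Qc s p)⁻¹) := by noncomm_ring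
  -- commutation of s with Qc⁻¹
  have hc2 : Commute s (2:ℍ[ℝ]) := (Quaternion.coe_commute (2:ℝ) s).symm
  have hcpr : Commute s ((p.re:ℝ):ℍ[ℝ]) := (Quaternion.coe_commute _ _).symm
  have hcns : Commute s ((Quaternion.normSq p : ℝ):ℍ[ℝ]) := (Quaternion.coe_commute _ _).symm
  have hcQ : Commute s (Qc s p) := by
    rw [hQcdef]
    exact (((Commute.refl s).pow_right 2).sub_right
      ((hc2.mul_right hcpr).mul_right (Commute.refl s))).add_right hcns
  have hcQi : Commute s ((Qc s p)⁻¹) := hcQ.inv_right₀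
  have hTQ2 : T * Qc s p = (4*((s - star p)*(s - ((p.re:ℝ):ℍ[ℝ])))) * (Qc s p)⁻¹ := by
    calc T * Qc s p = M*s - star p*M := hTQ
    _ = 4*((s-((p.re:ℝ):ℍ[ℝ]))*((Qc s p)⁻¹*s)) - star p*(4*((s-((p.re:ℝ):ℍ[ℝ]))*(Qc s p)⁻¹)) := by
          rw [hM]; noncomm_ring
    _ = 4*((s-((p.re:ℝ):ℍ[ℝ]))*(s*(Qc s p)⁻¹)) - star p*(4*((s-((p.re:ℝ):ℍ[ℝ]))*(Qc s p)⁻¹)) := by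
          rw [← hcQi.eq]
    _ = (4*(s*s) - 4*(((p.re:ℝ):ℍ[ℝ])*s) - (4*(star p*s) - 4*(star p*((p.re:ℝ):ℍ[ℝ]))))*(Qc s p)⁻¹ := by
          noncomm_ring
    _ = (4*(s*s) - 4*(s*((p.re:ℝ):ℍ[ℝ])) - (4*(star p*s) - 4*(star p*((p.re:ℝ):ℍ[ℝ]))))*(Qc s p)⁻¹ := by
          rw [hprA s]
    _ = (4*((s - star p)*(s - ((p.re:ℝ):ℍ[ℝ])))) * (Qc s p)⁻¹ := by noncomm_ring
  have hTeq : T = (4*((s - star p)*(s - ((p.re:ℝ):ℍ[ℝ])))) * (Qc s p)⁻¹ * (Qc s p)⁻¹ := by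
    rw [eq_mul_inv_iff_mul_eq₀ hQ]; exact hTQ2
  have hcQi2 : Commute s ((Qc s p)⁻¹*(Qc s p)⁻¹) := hcQi.mul_right hcQi
  have hP2L : P2L s p = (4*((s - star p)*(s - ((p.re:ℝ):ℍ[ℝ])))) * (Qc s p)⁻¹ * (Qc s p)⁻¹ := by
    calc P2L s p
        = 4*((s - star p)*(((Qc s p)⁻¹*(Qc s p)⁻¹)*s))
          - ((p.re:ℝ):ℍ[ℝ])*(4*((s-star p)*((Qc s p)⁻¹*(Qc s p)⁻¹))) := by
          rw [P2L, FL, sq]; noncomm_ring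
    _ = 4*((s - star p)*(s*((Qc s p)⁻¹*(Qc s p)⁻¹)))
          - (4*((s-star p)*((Qc s p)⁻¹*(Qc s p)⁻¹)))*((p.re:ℝ):ℍ[ℝ]) := by
          rw [← hcQi2.eq, hprA]
    _ = 4*((s - star p)*(s*((Qc s p)⁻¹*(Qc s p)⁻¹)))
          - (4*(s-star p))*(((Qc s p)⁻¹*(Qc s p)⁻¹)*((p.re:ℝ):ℍ[ℝ])) := by noncomm_ring
    _ = 4*((s - star p)*(s*((Qc s p)⁻¹*(Qc s p)⁻¹)))
          - (4*(s-star p))*(((p.re:ℝ):ℍ[ℝ])*((Qc s p)⁻¹*(Qc s p)⁻¹)) := by rw [hprA]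
    _ = (4*((s - star p)*(s - ((p.re:ℝ):ℍ[ℝ])))) * (Qc s p)⁻¹ * (Qc s p)⁻¹ := by noncomm_ring
  rw [hP2L, ← hTeq]
  exact hTsum
end
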